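/- Two-time-point g-formula: under sequential consistency, sequential exchangeability (Y2(a1,a2) ⫫ A1 and Y2(a1,a2) ⫫ A2 | (A1, Y1)), and positivity, the density of the counterfactual Y2(a1,a2) equals ∫ p(y2 | a1, y1, a2) p(y1 | a1) dy1. -/

import Mathlib

open MeasureTheory ProbabilityTheory

/-- Two-time-point g-formula for discrete variables (pmfs). Under
sequential consistency, sequential exchangeability (`Y2(a1,a2) ⫫ A1` and
`Y2(a1,a2) ⫫ A2 | (A1, Y1)`), and positivity, the pmf of the counterfactual
`Y2(a1,a2)` satisfies
`P(Y2(a1,a2) = y2) = ∑_{y1} p(y2 | a1, y1, a2) · p(y1 | a1)`,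
where the conditional pmfs are ratios of joint pmfs. -/
theorem stmt_3 {Ω : Type*} [MeasurableSpace Ω] (μ : Measure Ω) [IsProbabilityMeasure μ]
    (A1 Y1 A2 Y2 : Ω → ℕ)
    (Y1cf : ℕ → Ω → ℕ)            -- counterfactual Y1(a1)
    (Y2cf : ℕ → ℕ → Ω → ℕ)        -- counterfactual Y2(a1, a2)
    (hA1 : Measurable A1) (hY1 : Measurable Y1) (hA2 : Measurable A2) (hY2 : Measurable Y2)
    (hY1cf : ∀ a1, Measurable (Y1cf a1)) (hY2cf : ∀ a1 a2, Measurable (Y2cf a1 a2))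
    -- sequential consistency: Y1 = Y1(A1) and Y2 = Y2(A1, A2) a.s.
    (hcons1 : ∀ᵐ ω ∂μ, Y1 ω = Y1cf (A1 ω) ω)
    (hcons2 : ∀ᵐ ω ∂μ, Y2 ω = Y2cf (A1 ω) (A2 ω) ω)
    (a1 a2 : ℕ)
    -- sequential exchangeability
    (hexch1 : IndepFun (Y2cf a1 a2) A1 μ)
    (hexch2 : ∀ y1 : ℕ, 0 < μ {ω | A1 ω = a1 ∧ Y1 ω = y1} →
      IndepFun (Y2cf a1 a2) A2 (μ[|{ω | A1 ω = a1 ∧ Y1 ω = y1}]))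
    -- positivity of treatment probabilities given the past
    (hpos1 : 0 < μ {ω | A1 ω = a1})
    (hpos2 : ∀ y1 : ℕ, 0 < μ {ω | A1 ω = a1 ∧ Y1 ω = y1} →
      0 < μ {ω | A1 ω = a1 ∧ Y1 ω = y1 ∧ A2 ω = a2})
    (y2 : ℕ) :
    (μ {ω | Y2cf a1 a2 ω = y2}).toReal =
      ∑' y1 : ℕ,
        ((μ {ω | A1 ω = a1 ∧ Y1 ω = y1 ∧ A2 ω = a2 ∧ Y2 ω = y2}).toReal /
            (μ {ω | A1 ω = a1 ∧ Y1 ω = y1 ∧ A2 ω = a2}).toReal) *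
          ((μ {ω | A1 ω = a1 ∧ Y1 ω = y1}).toReal / (μ {ω | A1 ω = a1}).toReal) := by
  classical
  have hfin : ∀ s : Set Ω, μ s ≠ ⊤ := fun s => (measure_lt_top μ s).ne
  have hPpos : 0 < (μ {ω | A1 ω = a1}).toReal :=
    ENNReal.toReal_pos hpos1.ne' (hfin _)
  -- per-y1 identity
  have key : ∀ y1 : ℕ,
      ((μ {ω | A1 ω = a1 ∧ Y1 ω = y1 ∧ A2 ω = a2 ∧ Y2 ω = y2}).toReal /
          (μ {ω | A1 ω = a1 ∧ Y1 ω = y1 ∧ A2 ω = a2}).toReal) *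
        ((μ {ω | A1 ω = a1 ∧ Y1 ω = y1}).toReal / (μ {ω | A1 ω = a1}).toReal)
      = (μ ({ω | Y2cf a1 a2 ω = y2} ∩ {ω | A1 ω = a1 ∧ Y1 ω = y1})).toReal /
          (μ {ω | A1 ω = a1}).toReal := by
    intro y1
    by_cases hB : μ {ω | A1 ω = a1 ∧ Y1 ω = y1} = 0
    · have h1 : μ ({ω | Y2cf a1 a2 ω = y2} ∩ {ω | A1 ω = a1 ∧ Y1 ω = y1}) = 0 :=
        measure_mono_null Set.inter_subset_right hB
      have hsub : {ω | A1 ω = a1 ∧ Y1 ω = y1 ∧ A2 ω = a2 ∧ Y2 ω = y2} ⊆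
          {ω | A1 ω = a1 ∧ Y1 ω = y1} := fun ω hω => ⟨hω.1, hω.2.1⟩
      have h2 : μ {ω | A1 ω = a1 ∧ Y1 ω = y1 ∧ A2 ω = a2 ∧ Y2 ω = y2} = 0 :=
        measure_mono_null hsub hB
      simp [hB, h1, h2]
    · have hBpos : 0 < μ {ω | A1 ω = a1 ∧ Y1 ω = y1} := pos_iff_ne_zero.mpr hB
      have hBm : MeasurableSet {ω | A1 ω = a1 ∧ Y1 ω = y1} := by
        have : {ω | A1 ω = a1 ∧ Y1 ω = y1} = A1 ⁻¹' {a1} ∩ Y1 ⁻¹' {y1} := by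
          ext ω; simp [Set.mem_preimage]
        rw [this]
        exact (hA1 (measurableSet_singleton _)).inter (hY1 (measurableSet_singleton _))
      have hindep := (hexch2 y1 hBpos).measure_inter_preimage_eq_mul
        (s := {y2}) (t := {a2}) (measurableSet_singleton _) (measurableSet_singleton _)
      rw [cond_apply hBm, cond_apply hBm, cond_apply hBm] at hindep
      -- abbreviate
      set B := {ω | A1 ω = a1 ∧ Y1 ω = y1} with hBdef
      have hCset : B ∩ A2 ⁻¹' {a2} = {ω | A1 ω = a1 ∧ Y1 ω = y1 ∧ A2 ω = a2} := by
        ext ω; simp [hBdef, and_assoc]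
      have hQset : B ∩ Y2cf a1 a2 ⁻¹' {y2} = {ω | Y2cf a1 a2 ω = y2} ∩ B := by
        rw [Set.inter_comm]; rfl
      have hDset : μ (B ∩ (Y2cf a1 a2 ⁻¹' {y2} ∩ A2 ⁻¹' {a2})) =
          μ {ω | A1 ω = a1 ∧ Y1 ω = y1 ∧ A2 ω = a2 ∧ Y2 ω = y2} := by
        apply measure_congr
        rw [Filter.eventuallyEq_set]
        filter_upwards [hcons2] with ω hω
        simp only [hBdef, Set.mem_inter_iff, Set.mem_preimage, Set.mem_singleton_iff,
          Set.mem_setOf_eq]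
        constructor
        · rintro ⟨⟨h1, h2⟩, h3, h4⟩
          exact ⟨h1, h2, h4, by rw [hω, h1, h4]; exact h3⟩
        · rintro ⟨h1, h2, h3, h4⟩
          refine ⟨⟨h1, h2⟩, ?_, h3⟩
          rw [← h1, ← h3, ← hω]; exact h4
      rw [hCset, hDset, hQset] at hindep
      -- pass to reals
      have hCpos : 0 < (μ {ω | A1 ω = a1 ∧ Y1 ω = y1 ∧ A2 ω = a2}).toReal :=
        ENNReal.toReal_pos (hpos2 y1 hBpos).ne' (hfin _)
      have hBRpos : 0 < (μ B).toReal := ENNReal.toReal_pos hB (hfin _)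
      have hreal := congrArg ENNReal.toReal hindep
      rw [ENNReal.toReal_mul, ENNReal.toReal_mul, ENNReal.toReal_mul, ENNReal.toReal_mul,
        ENNReal.toReal_inv] at hreal
      set b := (μ B).toReal
      set d := (μ {ω | A1 ω = a1 ∧ Y1 ω = y1 ∧ A2 ω = a2 ∧ Y2 ω = y2}).toReal
      set q := (μ ({ω | Y2cf a1 a2 ω = y2} ∩ B)).toReal
      set c := (μ {ω | A1 ω = a1 ∧ Y1 ω = y1 ∧ A2 ω = a2}).toReal
      set p := (μ {ω | A1 ω = a1}).toReal
      -- hreal : b⁻¹ * d = (b⁻¹ * q) * (b⁻¹ * c)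
      have hq : q * c = b * d := by
        field_simp at hreal
        nlinarith [hreal, hBRpos]
      field_simp
      nlinarith [hq, hCpos, hPpos, hBRpos]
  rw [tsum_congr key]
  -- sum over y1 of μ (S ∩ B y1)
  have hSm : MeasurableSet ({ω | Y2cf a1 a2 ω = y2} ∩ {ω | A1 ω = a1}) := by
    have : {ω | Y2cf a1 a2 ω = y2} ∩ {ω | A1 ω = a1}
        = Y2cf a1 a2 ⁻¹' {y2} ∩ A1 ⁻¹' {a1} := rfl
    rw [this]
    exact ((hY2cf a1 a2) (measurableSet_singleton _)).inter (hA1 (measurableSet_singleton _))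
  have hsum : (∑' y1 : ℕ, μ ({ω | Y2cf a1 a2 ω = y2} ∩ {ω | A1 ω = a1 ∧ Y1 ω = y1}))
      = μ ({ω | Y2cf a1 a2 ω = y2} ∩ {ω | A1 ω = a1}) := by
    have hdecomp : ∀ y1 : ℕ, {ω | Y2cf a1 a2 ω = y2} ∩ {ω | A1 ω = a1 ∧ Y1 ω = y1}
        = ({ω | Y2cf a1 a2 ω = y2} ∩ {ω | A1 ω = a1}) ∩ Y1 ⁻¹' {y1} := by
      intro y1; ext ω
      simp only [Set.mem_inter_iff, Set.mem_setOf_eq, Set.mem_preimage, Set.mem_singleton_iff]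
      tauto
    simp_rw [hdecomp]
    rw [← measure_iUnion]
    · congr 1
      ext ω
      simp only [Set.mem_iUnion, Set.mem_inter_iff, Set.mem_preimage, Set.mem_singleton_iff]
      constructor
      · rintro ⟨n, h, _⟩; exact h
      · intro h; exact ⟨Y1 ω, h, rfl⟩
    · intro i j hij
      simp only [Function.onFun, Set.disjoint_left]
      rintro ω ⟨-, hi⟩ ⟨-, hj⟩
      exact hij (hi.symm.trans hj)
    · intro n
      exact hSm.inter (hY1 (measurableSet_singleton _))
  have hindep1 := hexch1.measure_inter_preimage_eq_mul
    (s := {y2}) (t := {a1}) (measurableSet_singleton _) (measurableSet_singleton _)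
  have hSA : μ ({ω | Y2cf a1 a2 ω = y2} ∩ {ω | A1 ω = a1})
      = μ {ω | Y2cf a1 a2 ω = y2} * μ {ω | A1 ω = a1} := hindep1
  rw [tsum_div_const, ← ENNReal.tsum_toReal_eq (fun _ => hfin _), hsum, hSA,
    ENNReal.toReal_mul]
  field_simp
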